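/- Let k be a field of characteristic zero, R = k[x_0,x_1,x_2,x_3], F = x_0^4 + x_1^4 + x_2^4 - 4 x_2 x_3^3 + 3 x_3^4, with u = (4x_0^3, 4x_1^3, 4(x_2^3 - x_3^3), -12 x_3^2(x_2 - x_3)). Then dim_k ( R_4 / ∑_{i,j=0}^3 k · x_i · u_j ) = 19, and the kernel of the Koszul differential ∂_u : R^6_2 → R^4_5 given by (a_{01},a_{02},a_{03},a_{12},a_{13},a_{23}) ↦ (−a_{01}u_1−a_{02}u_2−a_{03}u_3, a_{01}u_0−a_{12}u_2−a_{13}u_3, a_{02}u_0+a_{12}u_1−a_{23}u_3, a_{03}u_0+a_{13}u_1+a_{23}u_2) is zero. -/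

import Mathlib

open MvPolynomial Finsupp Module

section Aux

variable {k : Type*} [Field k]

private lemma stmt16Xdef (n : Fin 4) :
    (X n : MvPolynomial (Fin 4) k) = monomial (Finsupp.single n 1) 1 := rfl

private lemma stmt16_degree_eq_sum4 (d : Fin 4 →₀ ℕ) :
    d.degree = d 0 + d 1 + d 2 + d 3 := by
  rw [Finsupp.degree_apply,
    Finset.sum_subset (Finset.subset_univ _)
      (fun i _ hi => Finsupp.notMem_support_iff.mp hi), Fin.sum_univ_four]

private noncomputable def stmt16DegEquiv : {d : Fin 4 →₀ ℕ // d.degree = 4} ≃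
    {f : Fin 4 → Fin 5 // (f 0 : ℕ) + (f 1 : ℕ) + (f 2 : ℕ) + (f 3 : ℕ) = 4} where
  toFun d := ⟨fun i => ⟨d.1 i, by
      have h1 := Finsupp.le_degree i d.1
      have h2 := d.2
      omega⟩, by
    have h1 := stmt16_degree_eq_sum4 d.1
    have h2 := d.2
    simp only []
    omega⟩
  invFun f := ⟨Finsupp.equivFunOnFinite.symm (fun i => (f.1 i : ℕ)), by
    rw [stmt16_degree_eq_sum4]
    simp only [Finsupp.coe_equivFunOnFinite_symm]
    exact f.2⟩
  left_inv d := Subtype.ext (Finsupp.equivFunOnFinite.symm_apply_apply d.1)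
  right_inv f := Subtype.ext (funext fun i => Fin.ext (by
    simp [Finsupp.coe_equivFunOnFinite_symm]))

private lemma stmt16_card35 :
    Fintype.card {f : Fin 4 → Fin 5 // (f 0 : ℕ) + (f 1 : ℕ) + (f 2 : ℕ) + (f 3 : ℕ) = 4}
      = 35 := by decide

private lemma stmt16_homog_cast {φ : MvPolynomial (Fin 4) k} {m n : ℕ}
    (h : φ.IsHomogeneous m) (e : m = n) : φ.IsHomogeneous n := e ▸ h

private lemma stmt16_key0 (p q : MvPolynomial (Fin 4) k) (hp : p.degreeOf 0 ≤ 2)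
    (hq : q.degreeOf 0 ≤ 2) (h : p * X 0 ^ 3 = q) : p = 0 := by
  by_contra hp0
  have hep : finSuccEquiv k 3 p ≠ 0 :=
    (map_ne_zero_iff _ (finSuccEquiv k 3).injective).mpr hp0
  have e := congrArg (finSuccEquiv k 3) h
  rw [map_mul, map_pow, finSuccEquiv_X_zero] at e
  have h1 : ((finSuccEquiv k 3) p * Polynomial.X ^ 3).natDegree
      = ((finSuccEquiv k 3) p).natDegree + 3 := by
    rw [Polynomial.natDegree_mul hep (pow_ne_zero _ Polynomial.X_ne_zero),
      Polynomial.natDegree_X_pow]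
  have h2 := natDegree_finSuccEquiv p
  have h3 := natDegree_finSuccEquiv q
  rw [e, h3, h2] at h1
  omega

private lemma stmt16_key (i : Fin 4) (p q : MvPolynomial (Fin 4) k) (hp : p.degreeOf i ≤ 2)
    (hq : q.degreeOf i ≤ 2) (h : p * X i ^ 3 = q) : p = 0 := by
  have hinj : Function.Injective (Equiv.swap (0 : Fin 4) i) := (Equiv.swap 0 i).injective
  have hre := congrArg (rename (Equiv.swap (0 : Fin 4) i)) h
  rw [map_mul, map_pow, rename_X, Equiv.swap_apply_right] at hre
  have hd : ∀ r : MvPolynomial (Fin 4) k,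
      degreeOf 0 (rename (Equiv.swap (0 : Fin 4) i) r) = degreeOf i r := by
    intro r
    have h0 := degreeOf_rename_of_injective (p := r) hinj i
    rwa [Equiv.swap_apply_right] at h0
  have hp' : (rename (Equiv.swap (0 : Fin 4) i) p).degreeOf 0 ≤ 2 := by rw [hd]; exact hp
  have hq' : (rename (Equiv.swap (0 : Fin 4) i) q).degreeOf 0 ≤ 2 := by rw [hd]; exact hq
  have h0 := stmt16_key0 _ _ hp' hq' hre
  have hri : Function.Injective (rename (R := k) (Equiv.swap (0 : Fin 4) i)) :=
    rename_injective _ hinj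
  exact hri (by rw [map_zero]; exact h0)

private lemma stmt16_cancelC (c : k) (hc : c ≠ 0) (p : MvPolynomial (Fin 4) k)
    (h : C c * p = 0) : p = 0 := by
  rcases mul_eq_zero.mp h with h' | h'
  · exact absurd (by simpa using h' : c = 0) hc
  · exact h'

private lemma stmt16_degXpow (i j : Fin 4) (h : i ≠ j) (n : ℕ) :
    degreeOf i (X j ^ n : MvPolynomial (Fin 4) k) = 0 := by
  refine Nat.le_zero.mp ((degreeOf_pow_le _ _ _).trans ?_)
  rw [degreeOf_X, if_neg h, mul_zero]

private lemma stmt16_degCXpow (i j : Fin 4) (h : i ≠ j) (c : k) (n : ℕ) :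
    degreeOf i (C c * X j ^ n : MvPolynomial (Fin 4) k) = 0 := by
  refine Nat.le_zero.mp ((degreeOf_C_mul_le _ _ _).trans ?_)
  rw [stmt16_degXpow i j h n]

private lemma stmt16_degMix (i a b : Fin 4) (ha : i ≠ a) (hb : i ≠ b) (c : k) (n : ℕ) :
    degreeOf i (C c * (X a * X b ^ n) : MvPolynomial (Fin 4) k) = 0 := by
  refine Nat.le_zero.mp ((degreeOf_C_mul_le _ _ _).trans ((degreeOf_mul_le _ _ _).trans ?_))
  rw [stmt16_degXpow i b hb n, degreeOf_X, if_neg ha]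

end Aux

set_option maxHeartbeats 3000000 in
set_option maxRecDepth 20000 in
set_option synthInstance.maxHeartbeats 400000 in
theorem stmt16 (k : Type*) [Field k] [CharZero k]
    (F : MvPolynomial (Fin 4) k)
    (hF : F = X 0 ^ 4 + X 1 ^ 4 + X 2 ^ 4 - 4 * X 2 * X 3 ^ 3 + 3 * X 3 ^ 4)
    (u : Fin 4 → MvPolynomial (Fin 4) k) (hu : ∀ j, u j = pderiv j F)
    (W : Submodule k (MvPolynomial (Fin 4) k))
    (hW : W = Submodule.span k
      {p : MvPolynomial (Fin 4) k | ∃ i j : Fin 4, p = X i * u j}) :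
    finrank k
      ((homogeneousSubmodule (Fin 4) k 4) ⧸
        W.comap (homogeneousSubmodule (Fin 4) k 4).subtype) = 19 ∧
    ∀ a : Fin 6 → MvPolynomial (Fin 4) k,
      (∀ r, a r ∈ homogeneousSubmodule (Fin 4) k 2) →
      (-(a 0 * u 1) - a 1 * u 2 - a 2 * u 3 = 0) →
      (a 0 * u 0 - a 3 * u 2 - a 4 * u 3 = 0) →
      (a 1 * u 0 + a 3 * u 1 - a 5 * u 3 = 0) →
      (a 2 * u 0 + a 4 * u 1 + a 5 * u 2 = 0) →
      a = 0 := by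
  have hC : (C 12 : MvPolynomial (Fin 4) k) = C 4 * C 3 := by rw [← C_mul]; norm_num
  have hu0 : u 0 = C 4 * X 0 ^ 3 := by
    rw [hu, hF]
    simp [pderiv_X, show (4 : MvPolynomial (Fin 4) k) = C 4 from rfl,
      show (3 : MvPolynomial (Fin 4) k) = C 3 from rfl]
  have hu1 : u 1 = C 4 * X 1 ^ 3 := by
    rw [hu, hF]
    simp [pderiv_X, show (4 : MvPolynomial (Fin 4) k) = C 4 from rfl,
      show (3 : MvPolynomial (Fin 4) k) = C 3 from rfl]
  have hu2 : u 2 = C 4 * X 2 ^ 3 - C 4 * X 3 ^ 3 := by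
    rw [hu, hF]
    simp [pderiv_X, show (4 : MvPolynomial (Fin 4) k) = C 4 from rfl,
      show (3 : MvPolynomial (Fin 4) k) = C 3 from rfl]
    ring
  have hu3 : u 3 = C 12 * X 3 ^ 3 - C 12 * (X 2 * X 3 ^ 2) := by
    rw [hu, hF]
    simp [pderiv_X, show (4 : MvPolynomial (Fin 4) k) = C 4 from rfl,
      show (3 : MvPolynomial (Fin 4) k) = C 3 from rfl]
    linear_combination (X 2 * X 3 ^ 2 - X 3 ^ 3 : MvPolynomial (Fin 4) k) * hC
  have hu3ne : u 3 ≠ 0 := by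
    rw [hu3]
    intro hcon
    have c := congrArg (coeff (single 2 1 + single 3 2)) hcon
    simp [coeff_sub, stmt16Xdef, monomial_pow, monomial_mul, C_mul_monomial,
      coeff_monomial, Finsupp.ext_iff, Finsupp.add_apply, Finsupp.smul_apply,
      Finsupp.single_apply, Fin.forall_fin_succ', Fin.ext_iff, Fin.val_zero, Fin.val_succ,
      show ((1 : Fin 4) : ℕ) = 1 from rfl, show ((2 : Fin 4) : ℕ) = 2 from rfl,
      show ((3 : Fin 4) : ℕ) = 3 from rfl] at c
  have hu0ne : u 0 ≠ 0 := by
    rw [hu0]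
    exact mul_ne_zero (C_ne_zero.mpr (by norm_num)) (pow_ne_zero _ (X_ne_zero _))
  constructor
  · -- dimension count
    have hu_hom : ∀ j : Fin 4, (u j).IsHomogeneous 3 := by
      intro j
      fin_cases j
      · show (u 0).IsHomogeneous 3
        rw [hu0]; exact isHomogeneous_C_mul_X_pow 4 0 3
      · show (u 1).IsHomogeneous 3
        rw [hu1]; exact isHomogeneous_C_mul_X_pow 4 1 3
      · show (u 2).IsHomogeneous 3
        rw [hu2]
        exact (isHomogeneous_C_mul_X_pow 4 2 3).sub (isHomogeneous_C_mul_X_pow 4 3 3)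
      · show (u 3).IsHomogeneous 3
        rw [hu3]
        refine (isHomogeneous_C_mul_X_pow 12 3 3).sub ?_
        have h0 := ((isHomogeneous_X k (2 : Fin 4)).mul (isHomogeneous_X_pow (3 : Fin 4) 2)).C_mul (12 : k)
        exact stmt16_homog_cast h0 (by norm_num)
    have hSv : {p : MvPolynomial (Fin 4) k | ∃ i j : Fin 4, p = X i * u j}
        = Set.range (fun p : Fin 4 × Fin 4 => X p.1 * u p.2) := by
      ext q
      constructor
      · rintro ⟨i, j, rfl⟩; exact ⟨(i, j), rfl⟩
      · rintro ⟨⟨i, j⟩, rfl⟩; exact ⟨i, j, rfl⟩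
    have hWle : W ≤ homogeneousSubmodule (Fin 4) k 4 := by
      rw [hW, Submodule.span_le]
      rintro q ⟨i, j, rfl⟩
      rw [SetLike.mem_coe, mem_homogeneousSubmodule]
      have h0 := (isHomogeneous_X k i).mul (hu_hom j)
      exact stmt16_homog_cast h0 (by norm_num)
    have hLI : LinearIndependent k (fun p : Fin 4 × Fin 4 => X p.1 * u p.2) := by
      rw [Fintype.linearIndependent_iff]
      intro g hg
      rw [Fintype.sum_prod_type] at hg
      simp only [Fin.sum_univ_four, hu0, hu1, hu2, hu3] at hg
      have c00 := congrArg (coeff (single (0:Fin 4) 1 + single 0 3)) hg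
      have c10 := congrArg (coeff (single (1:Fin 4) 1 + single 0 3)) hg
      have c20 := congrArg (coeff (single (2:Fin 4) 1 + single 0 3)) hg
      have c30 := congrArg (coeff (single (3:Fin 4) 1 + single 0 3)) hg
      have c01 := congrArg (coeff (single (0:Fin 4) 1 + single 1 3)) hg
      have c11 := congrArg (coeff (single (1:Fin 4) 1 + single 1 3)) hg
      have c21 := congrArg (coeff (single (2:Fin 4) 1 + single 1 3)) hg
      have c31 := congrArg (coeff (single (3:Fin 4) 1 + single 1 3)) hg
      have c02 := congrArg (coeff (single (0:Fin 4) 1 + single 2 3)) hg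
      have c12 := congrArg (coeff (single (1:Fin 4) 1 + single 2 3)) hg
      have c22 := congrArg (coeff (single (2:Fin 4) 1 + single 2 3)) hg
      have c32 := congrArg (coeff (single (3:Fin 4) 1 + single 2 3)) hg
      have c03 := congrArg (coeff (single (0:Fin 4) 1 + (single 2 1 + single 3 2))) hg
      have c13 := congrArg (coeff (single (1:Fin 4) 1 + (single 2 1 + single 3 2))) hg
      have c23 := congrArg (coeff (single (2:Fin 4) 2 + single 3 2)) hg
      have c33 := congrArg (coeff (single (3:Fin 4) 4)) hg
      simp [coeff_add, coeff_sub, coeff_smul, coeff_zero, mul_sub, stmt16Xdef, monomial_pow,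
        monomial_mul, C_mul_monomial, coeff_monomial, Finsupp.ext_iff, Finsupp.add_apply,
        Finsupp.smul_apply, Finsupp.single_apply, Fin.forall_fin_succ',
        Fin.val_zero, Fin.val_succ, smul_eq_mul,
        show ((1 : Fin 4) : ℕ) = 1 from rfl, show ((2 : Fin 4) : ℕ) = 2 from rfl,
        show ((3 : Fin 4) : ℕ) = 3 from rfl] at c00 c10 c20 c30 c01 c11 c21 c31 c02 c12 c22 c32 c03 c13 c23 c33
      have z33 : g (3, 3) = 0 := by linear_combination c33 / 12 + c32 / 3
      intro p
      fin_cases p <;> first | assumption | exact z33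
    have hW16 : finrank k ↥W = 16 := by
      rw [hW, hSv, finrank_span_eq_card hLI]
      simp
    have hC16 : finrank k ↥(W.comap (homogeneousSubmodule (Fin 4) k 4).subtype) = 16 := by
      rw [LinearEquiv.finrank_eq (Submodule.comapSubtypeEquivOfLe hWle)]
      exact hW16
    letI inst1 : Fintype {d : Fin 4 →₀ ℕ // d.degree = 4} :=
      Fintype.ofEquiv _ stmt16DegEquiv.symm
    letI inst1' : Fintype ↥{d : Fin 4 →₀ ℕ | d.degree = 4} := inst1
    have hR4eq : homogeneousSubmodule (Fin 4) k 4
        = restrictSupport k {d : Fin 4 →₀ ℕ | d.degree = 4} :=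
      homogeneousSubmodule_eq_finsupp_supported (σ := Fin 4) (R := k) 4
    haveI inst2 : Module.Finite k (restrictSupport k {d : Fin 4 →₀ ℕ | d.degree = 4}) :=
      Module.Finite.of_basis (basisRestrictSupport k _)
    haveI inst3 : Module.Finite k ↥(homogeneousSubmodule (Fin 4) k 4) := hR4eq ▸ inst2
    have h35 : finrank k ↥(homogeneousSubmodule (Fin 4) k 4) = 35 := by
      rw [hR4eq]
      exact (finrank_eq_card_basis (basisRestrictSupport k _)).trans
        ((Fintype.card_congr stmt16DegEquiv).trans stmt16_card35)
    have hfin := Submodule.finrank_quotient_add_finrank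
      (W.comap (homogeneousSubmodule (Fin 4) k 4).subtype)
    rw [hC16, h35] at hfin
    omega
  · -- Koszul kernel
    intro a ha h1 h2 h3 h4
    have hdeg : ∀ r i, degreeOf i (a r) ≤ 2 := fun r i =>
      (degreeOf_le_totalDegree _ i).trans
        (((mem_homogeneousSubmodule _ _).mp (ha r)).totalDegree_le)
    have hU2 : degreeOf 0 (u 2) = 0 := by
      rw [hu2]
      refine Nat.le_zero.mp ((degreeOf_sub_le _ _ _).trans ?_)
      rw [stmt16_degCXpow 0 2 (by decide), stmt16_degCXpow 0 3 (by decide)]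
      simp
    have hU30 : degreeOf 0 (u 3) = 0 := by
      rw [hu3]
      refine Nat.le_zero.mp ((degreeOf_sub_le _ _ _).trans ?_)
      rw [stmt16_degMix 0 2 3 (by decide) (by decide), stmt16_degCXpow 0 3 (by decide)]
      simp
    have hU31 : degreeOf 1 (u 3) = 0 := by
      rw [hu3]
      refine Nat.le_zero.mp ((degreeOf_sub_le _ _ _).trans ?_)
      rw [stmt16_degMix 1 2 3 (by decide) (by decide), stmt16_degCXpow 1 3 (by decide)]
      simp
    have e2 : (C 4 * a 0) * X 0 ^ 3 = a 3 * u 2 + a 4 * u 3 := by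
      rw [hu0] at h2
      linear_combination h2
    have hp2 : degreeOf 0 (C 4 * a 0) ≤ 2 := (degreeOf_C_mul_le _ _ _).trans (hdeg 0 0)
    have hq2 : degreeOf 0 (a 3 * u 2 + a 4 * u 3) ≤ 2 := by
      refine (degreeOf_add_le _ _ _).trans (max_le ?_ ?_)
      · refine (degreeOf_mul_le _ _ _).trans ?_
        rw [hU2]
        simpa using hdeg 3 0
      · refine (degreeOf_mul_le _ _ _).trans ?_
        rw [hU30]
        simpa using hdeg 4 0
    have ha0 : a 0 = 0 :=
      stmt16_cancelC 4 (by norm_num) _ (stmt16_key 0 _ _ hp2 hq2 e2)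
    have e2' : a 3 * u 2 + a 4 * u 3 = 0 := by
      rw [ha0] at e2
      simpa using e2.symm
    have e3 : (C 4 * a 1) * X 0 ^ 3 = a 5 * u 3 - C 4 * (a 3 * X 1 ^ 3) := by
      rw [hu0, hu1] at h3
      linear_combination h3
    have hp3 : degreeOf 0 (C 4 * a 1) ≤ 2 := (degreeOf_C_mul_le _ _ _).trans (hdeg 1 0)
    have hq3 : degreeOf 0 (a 5 * u 3 - C 4 * (a 3 * X 1 ^ 3)) ≤ 2 := by
      refine (degreeOf_sub_le _ _ _).trans (max_le ?_ ?_)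
      · refine (degreeOf_mul_le _ _ _).trans ?_
        rw [hU30]
        simpa using hdeg 5 0
      · refine (degreeOf_C_mul_le _ _ _).trans ((degreeOf_mul_le _ _ _).trans ?_)
        rw [stmt16_degXpow 0 1 (by decide)]
        simpa using hdeg 3 0
    have ha1 : a 1 = 0 :=
      stmt16_cancelC 4 (by norm_num) _ (stmt16_key 0 _ _ hp3 hq3 e3)
    have e3' : a 5 * u 3 - C 4 * (a 3 * X 1 ^ 3) = 0 := by
      rw [ha1] at e3
      simpa using e3.symm
    have e4 : (C 4 * a 3) * X 1 ^ 3 = a 5 * u 3 := by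
      linear_combination -e3'
    have hp4 : degreeOf 1 (C 4 * a 3) ≤ 2 := (degreeOf_C_mul_le _ _ _).trans (hdeg 3 1)
    have hq4 : degreeOf 1 (a 5 * u 3) ≤ 2 := by
      refine (degreeOf_mul_le _ _ _).trans ?_
      rw [hU31]
      simpa using hdeg 5 1
    have ha3 : a 3 = 0 :=
      stmt16_cancelC 4 (by norm_num) _ (stmt16_key 1 _ _ hp4 hq4 e4)
    have ha5 : a 5 = 0 := by
      have e5 : a 5 * u 3 = 0 := by
        rw [ha3] at e4
        simpa using e4.symm
      rcases mul_eq_zero.mp e5 with h' | h'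
      · exact h'
      · exact absurd h' hu3ne
    have ha4 : a 4 = 0 := by
      have e6 : a 4 * u 3 = 0 := by
        rw [ha3] at e2'
        simpa using e2'
      rcases mul_eq_zero.mp e6 with h' | h'
      · exact h'
      · exact absurd h' hu3ne
    have ha2 : a 2 = 0 := by
      have e7 : a 2 * u 0 = 0 := by
        rw [ha4, ha5] at h4
        simpa using h4
      rcases mul_eq_zero.mp e7 with h' | h'
      · exact h'
      · exact absurd h' hu0ne
    funext r
    fin_cases r <;> simp only [Pi.zero_apply] <;> assumption
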